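/- Gaussian Berezin integral with source: for an invertible antisymmetric 2n×2n matrix A and odd sources η_i (odd elements of an auxiliary Grassmann algebra), ∫ exp(½ θᵀAθ + ηᵀθ) dθ = Pf(A) · exp(½ ηᵀA^{-1}η), where the integral extracts the coefficient of θ₁⋯θ_{2n}. -/

import Mathlib

open Matrix

/-- The ordered monomial `x_I = x_{i_1} * ... * x_{i_k}` associated with a finite
index set `I = {i_1 < ... < i_k}`. -/
def gmonomial {A : Type*} [Ring A] {m : ℕ} (x : Fin m → A) (I : Finset (Fin m)) : A :=
  ((I.sort (· ≤ ·)).map x).prod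

/-- The finite exponential series `sum_{k < N} x^k / k!`. -/
noncomputable def gexp {A : Type*} [Ring A] [Algebra ℂ A] (N : ℕ) (x : A) : A :=
  ∑ k ∈ Finset.range N, ((k.factorial : ℂ))⁻¹ • x ^ k

/-- The Pfaffian of a `2n x 2n` matrix, via
`Pf(A) = (1/(2^n n!)) * sum_sigma sgn(sigma) * prod_i A_{sigma(2i), sigma(2i+1)}`. -/
noncomputable def pfaffian {n : ℕ} (A : Matrix (Fin (2 * n)) (Fin (2 * n)) ℂ) : ℂ :=
  (1 / ((2 : ℂ) ^ n * (n.factorial : ℂ))) *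
    ∑ σ : Equiv.Perm (Fin (2 * n)),
      ((Equiv.Perm.sign σ : ℤ) : ℂ) *
        ∏ i : Fin n,
          A (σ ⟨2 * (i : ℕ), by omega⟩) (σ ⟨2 * (i : ℕ) + 1, by omega⟩)


namespace GB

/-- Noncommutative expansion of a power of a finite sum. -/
lemma pow_sum_eq {R ι : Type*} [Ring R] [Fintype ι] (x : ι → R) :
    ∀ k : ℕ, (∑ i, x i) ^ k = ∑ g : Fin k → ι, (List.ofFn fun a => x (g a)).prod := by
  intro k
  induction k with
  | zero =>
      simp
  | succ k ih =>
      rw [pow_succ', ih, Finset.mul_sum]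
      rw [← Equiv.sum_comp (Fin.consEquiv (fun _ : Fin (k+1) => ι)) ]
      rw [Fintype.sum_prod_type]
      simp only [Fin.consEquiv_apply, List.ofFn_succ, List.prod_cons, Fin.cons_zero,
        Fin.cons_succ]
      rw [Finset.sum_comm]
      congr 1
      funext g
      rw [Finset.sum_mul]

lemma ofFn_prod_smul {R : Type*} [Ring R] [Algebra ℂ R] :
    ∀ (k : ℕ) (z : Fin k → ℂ) (y : Fin k → R),
      (List.ofFn fun a => z a • y a).prod = (∏ a, z a) • (List.ofFn y).prod := by
  intro k
  induction k with
  | zero => simp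
  | succ k ih =>
      intro z y
      simp only [List.ofFn_succ, List.prod_cons, Fin.prod_univ_succ]
      rw [ih (fun a => z a.succ) (fun a => y a.succ), smul_mul_smul_comm]

def pairFn {ι : Type*} {k : ℕ} (g : Fin k → ι × ι) (b : Fin (2 * k)) : ι :=
  if (b : ℕ) % 2 = 0 then (g ⟨(b : ℕ) / 2, by omega⟩).1 else (g ⟨(b : ℕ) / 2, by omega⟩).2

lemma ofFn_pairFn {R ι : Type*} [Ring R] (y : ι → R) (k : ℕ) (g : Fin (k+1) → ι × ι) :
    (List.ofFn fun b : Fin (2 * (k+1)) => y (pairFn g b))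
      = y (g 0).1 :: y (g 0).2 ::
          (List.ofFn fun b : Fin (2 * k) => y (pairFn (fun a => g a.succ) b)) := by
  show (List.ofFn fun b : Fin (2*k+1+1) => y (pairFn g ⟨b.1, by omega⟩))
      = y (g 0).1 :: y (g 0).2 ::
          (List.ofFn fun b : Fin (2 * k) => y (pairFn (fun a => g a.succ) b))
  rw [List.ofFn_succ]
  rw [List.ofFn_succ]
  congr 1
  · simp [pairFn]
  congr 1
  · simp [pairFn]
  · congr 1
    funext b
    have hb := b.isLt
    have e1 : ((b.succ.succ : Fin (2*k+1+1)) : ℕ) = (b : ℕ) + 2 := rfl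
    simp only [pairFn, e1]
    have h1 : ((b : ℕ) + 2) % 2 = (b : ℕ) % 2 := by omega
    have h3 : ((b : ℕ) + 2) / 2 = (b : ℕ) / 2 + 1 := by omega
    simp only [h1, h3]
    congr 1 <;>
    · congr 1
      · congr 1
        exact Fin.ext (by simp)

lemma ofFn_prod_pair {R ι : Type*} [Ring R] (y : ι → R) :
    ∀ (k : ℕ) (g : Fin k → ι × ι),
      (List.ofFn fun a => y (g a).1 * y (g a).2).prod
        = (List.ofFn fun b : Fin (2 * k) => y (pairFn g b)).prod := by
  intro k
  induction k with
  | zero => simp [pairFn]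
  | succ k ih =>
      intro g
      rw [List.ofFn_succ]
      simp only [List.prod_cons]
      rw [ih (fun a => g a.succ)]
      rw [ofFn_pairFn]
      simp [mul_assoc]

end GB

namespace GB

variable {m : ℕ}

abbrev Lam (m : ℕ) := ExteriorAlgebra ℂ (Fin m → ℂ)

noncomputable def eL (i : Fin m) : Lam m := ExteriorAlgebra.ι ℂ (Pi.single i 1)

noncomputable def wordL {k : ℕ} (f : Fin k → Fin m) : Lam m :=
  (List.ofFn fun a => eL (f a)).prod

lemma wordL_eq_iMulti {k : ℕ} (f : Fin k → Fin m) :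
    wordL f = ExteriorAlgebra.ιMulti ℂ k (fun a => Pi.single (f a) (1:ℂ)) :=
  (ExteriorAlgebra.ιMulti_apply _).symm

lemma single_one_injective : Function.Injective (fun i : Fin m => Pi.single i (1:ℂ)) := by
  intro i j h
  have := congrFun h i
  simp only [Pi.single_apply] at this
  by_cases hij : i = j
  · exact hij
  · simp [hij] at this

lemma wordL_eq_zero {k : ℕ} (f : Fin k → Fin m) (hf : ¬ Function.Injective f) :
    wordL f = 0 := by
  rw [wordL_eq_iMulti]
  apply AlternatingMap.map_eq_zero_of_not_injective
  intro hinj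
  exact hf fun a b hab => hinj (by simp only []; rw [hab])

lemma sort_univ_eq : (Finset.univ : Finset (Fin m)).sort (· ≤ ·) = List.finRange m := by
  exact Fin.sort_univ m

lemma gmon_univ_eq_wordL : gmonomial eL (Finset.univ : Finset (Fin m)) = wordL (id : Fin m → Fin m) := by
  rw [gmonomial, sort_univ_eq, wordL]
  rw [List.finRange]
  rw [List.map_ofFn]
  rfl

lemma wordL_perm (σ : Equiv.Perm (Fin m)) :
    wordL (⇑σ) = (Equiv.Perm.sign σ : ℤ) • gmonomial eL (Finset.univ : Finset (Fin m)) := by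
  rw [gmon_univ_eq_wordL, wordL_eq_iMulti, wordL_eq_iMulti]
  have := (ExteriorAlgebra.ιMulti ℂ m (M := Fin m → ℂ)).map_perm
    (fun i : Fin m => Pi.single i (1:ℂ)) σ
  rw [show (fun a : Fin m => Pi.single (σ a) (1:ℂ))
      = (fun i : Fin m => Pi.single i (1:ℂ)) ∘ σ from rfl, this]
  simp [Units.smul_def]

end GB

namespace GB2
open GB

lemma sort_eq_ofFn {α : Type*} [LinearOrder α] (s : Finset α) {k : ℕ} (h : s.card = k) :
    s.sort (· ≤ ·) = List.ofFn (fun a : Fin k => s.orderEmbOfFin h a) := by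
  apply List.ext_getElem
  · simp [Finset.length_sort, h]
  · intro i h1 h2
    rw [List.getElem_ofFn]
    rw [Finset.orderEmbOfFin_apply]
    rfl

lemma gmon_eq_ofFn {A : Type*} [Ring A] {m : ℕ} (x : Fin m → A) (I : Finset (Fin m))
    {k : ℕ} (h : I.card = k) :
    gmonomial x I = (List.ofFn fun a : Fin k => x (I.orderEmbOfFin h a)).prod := by
  rw [gmonomial, sort_eq_ofFn I h, List.map_ofFn]
  rfl

lemma wordL_inj {m k : ℕ} (f : Fin k → Fin m) (hf : Function.Injective f) :
    ∃ s : ℤˣ, wordL f = (s : ℤ) • gmonomial eL (Finset.image f Finset.univ) := by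
  classical
  set I : Finset (Fin m) := Finset.image f Finset.univ with hI
  have hcard : I.card = k := by
    rw [hI, Finset.card_image_of_injective _ hf, Finset.card_univ, Fintype.card_fin]
  set g : Fin k → Fin m := fun a => I.orderEmbOfFin hcard a with hg
  have hmem : ∀ a, f a ∈ I := fun a => Finset.mem_image_of_mem f (Finset.mem_univ a)
  set τ : Fin k → Fin k := fun a => (I.orderIsoOfFin hcard).symm ⟨f a, hmem a⟩ with hτ
  have hτinj : Function.Injective τ := by
    intro a b hab
    apply hf
    have := congrArg (fun z => ((I.orderIsoOfFin hcard) z : Fin m)) hab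
    simpa [hτ] using this
  have hτbij : Function.Bijective τ :=
    (Fintype.bijective_iff_injective_and_card τ).2 ⟨hτinj, rfl⟩
  set σ : Equiv.Perm (Fin k) := Equiv.ofBijective τ hτbij with hσ
  have hfg : ∀ a, f a = g (σ a) := by
    intro a
    show f a = ((I.orderIsoOfFin hcard) (τ a) : Fin m)
    exact (congrArg Subtype.val ((I.orderIsoOfFin hcard).apply_symm_apply ⟨f a, hmem a⟩)).symm
  have hfun : f = g ∘ ⇑σ := funext hfg
  refine ⟨Equiv.Perm.sign σ, ?_⟩
  rw [hfun, wordL_eq_iMulti]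
  have hcomp : (fun a : Fin k => Pi.single ((g ∘ ⇑σ) a) (1:ℂ))
      = (fun a : Fin k => Pi.single (g a) (1:ℂ)) ∘ ⇑σ := rfl
  rw [hcomp, (ExteriorAlgebra.ιMulti ℂ k (M := Fin m → ℂ)).map_perm, Units.smul_def]
  congr 1
  rw [gmon_eq_ofFn eL I hcard, ← wordL_eq_iMulti (fun a => g a)]
  rfl

end GB2

namespace GB3
open GB GB2

variable {A : Type*} [Ring A] [Algebra ℂ A] {m : ℕ}

noncomputable def liftFam (ψ : Fin m → A) : (Fin m → ℂ) →ₗ[ℂ] A :=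
  ∑ j, (LinearMap.proj j : (Fin m → ℂ) →ₗ[ℂ] ℂ).smulRight (ψ j)

lemma liftFam_apply (ψ : Fin m → A) (x : Fin m → ℂ) :
    liftFam ψ x = ∑ j, x j • ψ j := by
  simp [liftFam]

lemma liftFam_sq (ψ : Fin m → A) (hψa : ∀ i j, ψ i * ψ j = -(ψ j * ψ i))
    (x : Fin m → ℂ) : liftFam ψ x * liftFam ψ x = 0 := by
  rw [liftFam_apply, Finset.sum_mul]
  have hexp : ∀ i, ((x i • ψ i) * ∑ j, x j • ψ j) = ∑ j, (x i * x j) • (ψ i * ψ j) := by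
    intro i
    rw [Finset.mul_sum]
    exact Finset.sum_congr rfl fun j _ => smul_mul_smul_comm (x i) (ψ i) (x j) (ψ j)
  simp only [hexp]
  set T : Fin m → Fin m → A := fun i j => (x i * x j) • (ψ i * ψ j) with hT
  have key : (2:ℂ) • (∑ i, ∑ j, T i j) = 0 := by
    rw [two_smul]
    nth_rewrite 2 [Finset.sum_comm]
    rw [← Finset.sum_add_distrib]
    apply Finset.sum_eq_zero
    intro i _
    rw [← Finset.sum_add_distrib]
    apply Finset.sum_eq_zero
    intro j _
    rw [hT]
    simp only []
    rw [hψa i j, smul_neg, mul_comm (x i) (x j)]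
    exact neg_add_cancel _
  have := congrArg (fun z => ((2:ℂ))⁻¹ • z) key
  simpa [smul_smul] using this

noncomputable def Phi (ψ : Fin m → A) (hψa : ∀ i j, ψ i * ψ j = -(ψ j * ψ i)) :
    Lam m →ₐ[ℂ] A :=
  ExteriorAlgebra.lift ℂ ⟨liftFam ψ, liftFam_sq ψ hψa⟩

lemma Phi_e (ψ : Fin m → A) (hψa : ∀ i j, ψ i * ψ j = -(ψ j * ψ i)) (i : Fin m) :
    Phi ψ hψa (eL i) = ψ i := by
  rw [Phi, eL, ExteriorAlgebra.lift_ι_apply, liftFam_apply]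
  simp [Pi.single_apply, ite_smul]

lemma Phi_word (ψ : Fin m → A) (hψa : ∀ i j, ψ i * ψ j = -(ψ j * ψ i))
    {k : ℕ} (f : Fin k → Fin m) :
    Phi ψ hψa (wordL f) = (List.ofFn fun a => ψ (f a)).prod := by
  rw [wordL, map_list_prod, List.map_ofFn]
  exact congrArg List.prod (congrArg List.ofFn (funext fun a => Phi_e ψ hψa (f a)))

lemma Phi_gmon (ψ : Fin m → A) (hψa : ∀ i j, ψ i * ψ j = -(ψ j * ψ i))
    (I : Finset (Fin m)) :
    Phi ψ hψa (gmonomial eL I) = gmonomial ψ I := by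
  rw [gmonomial, gmonomial, map_list_prod, List.map_map]
  exact congrArg List.prod
    (congrArg (fun fn => List.map fn (Finset.sort I (· ≤ ·))) (funext fun i => Phi_e ψ hψa i))

end GB3

namespace GB4
open GB GB2 GB3

variable {A : Type*} [Ring A] [Algebra ℂ A] {n : ℕ}

def gOf {n : ℕ} (σ : Equiv.Perm (Fin (2*n))) : Fin n → Fin (2*n) × Fin (2*n) :=
  fun i => (σ ⟨2 * (i : ℕ), by omega⟩, σ ⟨2 * (i : ℕ) + 1, by omega⟩)

lemma pairFn_gOf {n : ℕ} (σ : Equiv.Perm (Fin (2*n))) : pairFn (gOf σ) = ⇑σ := by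
  funext b
  have hb := b.isLt
  by_cases hpar : (b : ℕ) % 2 = 0
  · rw [pairFn, if_pos hpar, gOf]
    exact congrArg σ (Fin.ext (show 2 * ((b:ℕ)/2) = (b:ℕ) by omega))
  · rw [pairFn, if_neg hpar, gOf]
    exact congrArg σ (Fin.ext (show 2 * ((b:ℕ)/2) + 1 = (b:ℕ) by omega))

noncomputable def sgn {n : ℕ} (f : Fin (2*n) → Fin (2*n)) : ℂ :=
  if h : Function.Bijective f then (((Equiv.Perm.sign (Equiv.ofBijective f h)) : ℤ) : ℂ) else 0

lemma sgn_perm {n : ℕ} (σ : Equiv.Perm (Fin (2*n))) :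
    sgn ⇑σ = ((Equiv.Perm.sign σ : ℤ) : ℂ) := by
  rw [sgn, dif_pos σ.bijective]
  have h : Equiv.ofBijective ⇑σ σ.bijective = σ := Equiv.ext fun x => rfl
  rw [h]

lemma gOf_pairFn {n : ℕ} (g : Fin n → Fin (2*n) × Fin (2*n))
    (hbij : Function.Bijective (pairFn g)) :
    gOf (Equiv.ofBijective (pairFn g) hbij) = g := by
  funext i
  refine Prod.ext ?_ ?_
  · show pairFn g ⟨2*(i:ℕ), by omega⟩ = (g i).1
    rw [pairFn, if_pos (show (2*(i:ℕ)) % 2 = 0 by omega)]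
    exact congrArg (fun z => (g z).1) (Fin.ext (show (2*(i:ℕ))/2 = (i:ℕ) by omega))
  · show pairFn g ⟨2*(i:ℕ)+1, by omega⟩ = (g i).2
    rw [pairFn, if_neg (show ¬ ((2*(i:ℕ)+1) % 2 = 0) by omega)]
    exact congrArg (fun z => (g z).2) (Fin.ext (show (2*(i:ℕ)+1)/2 = (i:ℕ) by omega))

lemma sgn_pairFn {n : ℕ} (g : Fin n → Fin (2*n) × Fin (2*n))
    (hbij : Function.Bijective (pairFn g)) :
    sgn (pairFn g)
      = ((Equiv.Perm.sign (Equiv.ofBijective (pairFn g) hbij) : ℤ) : ℂ) := by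
  unfold sgn
  exact dif_pos hbij

section core

variable (ψ : Fin (2*n) → A) (hψa : ∀ i j, ψ i * ψ j = -(ψ j * ψ i))
  (ber : A →ₗ[ℂ] A) (W : Submodule ℂ A)
  (hb : ∀ c ∈ W, ∀ I : Finset (Fin (2*n)),
    ber (c * gmonomial ψ I) = if I = Finset.univ then c else 0)

include hψa hb

lemma ber_word_ne {c : A} (hc : c ∈ W) {j : ℕ} (hj : j ≠ 2*n) (f : Fin j → Fin (2*n)) :
    ber (c * (List.ofFn fun a => ψ (f a)).prod) = 0 := by
  rw [← Phi_word ψ hψa f]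
  by_cases hf : Function.Injective f
  · obtain ⟨s, hs⟩ := wordL_inj f hf
    rw [hs, map_zsmul, mul_smul_comm, map_zsmul, Phi_gmon ψ hψa, hb c hc, if_neg, smul_zero]
    intro hIm
    have := congrArg Finset.card hIm
    rw [Finset.card_image_of_injective _ hf] at this
    simp at this
    omega
  · rw [wordL_eq_zero f hf, map_zero, mul_zero, map_zero]

lemma ber_word_top {c : A} (hc : c ∈ W) (f : Fin (2*n) → Fin (2*n)) :
    ber (c * (List.ofFn fun a => ψ (f a)).prod) = sgn f • c := by
  rw [← Phi_word ψ hψa f]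
  by_cases h : Function.Bijective f
  · rw [show f = ⇑(Equiv.ofBijective f h) from rfl]
    rw [wordL_perm, map_zsmul, mul_smul_comm, map_zsmul, Phi_gmon ψ hψa, hb c hc, if_pos rfl]
    rw [sgn_perm, Int.cast_smul_eq_zsmul]
  · have hf : ¬ Function.Injective f := by
      intro hinj
      exact h ((Fintype.bijective_iff_injective_and_card f).2 ⟨hinj, rfl⟩)
    have hz : sgn f = 0 := dif_neg h
    rw [wordL_eq_zero f hf, map_zero, mul_zero, map_zero, hz, zero_smul]

omit hψa hb in
lemma pf_sum_eq (Mx : Matrix (Fin (2*n)) (Fin (2*n)) ℂ) :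
    ∑ g : Fin n → Fin (2*n) × Fin (2*n), (∏ a, Mx (g a).1 (g a).2) * sgn (pairFn g)
      = ∑ σ : Equiv.Perm (Fin (2*n)),
          ((Equiv.Perm.sign σ : ℤ) : ℂ) *
            ∏ i : Fin n, Mx (σ ⟨2 * (i : ℕ), by omega⟩) (σ ⟨2 * (i : ℕ) + 1, by omega⟩) := by
  classical
  rw [← Finset.sum_subset
      (Finset.filter_subset (fun g => Function.Bijective (pairFn g)) Finset.univ)
      (by
        intro g _ hg
        rw [Finset.mem_filter] at hg
        push_neg at hg
        rw [show sgn (pairFn g) = 0 from dif_neg (hg (Finset.mem_univ g)), mul_zero])]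
  refine Finset.sum_bij' (fun g hg => Equiv.ofBijective (pairFn g)
      (by rw [Finset.mem_filter] at hg; exact hg.2))
    (fun σ _ => gOf σ) ?_ ?_ ?_ ?_ ?_
  · intro g hg
    exact Finset.mem_univ _
  · intro σ _
    rw [Finset.mem_filter]
    refine ⟨Finset.mem_univ _, ?_⟩
    rw [pairFn_gOf]
    exact σ.bijective
  · intro g hg
    rw [Finset.mem_filter] at hg
    exact gOf_pairFn g hg.2
  · intro σ _
    exact Equiv.ext fun b => congrFun (pairFn_gOf σ) b
  · intro g hg
    rw [Finset.mem_filter] at hg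
    rw [sgn_pairFn g hg.2, mul_comm]
    congr 1
    refine Finset.prod_congr rfl fun i _ => ?_
    have h1 := congrFun (gOf_pairFn g hg.2) i
    rw [← h1]
    rfl

lemma ber_Q_pow {c : A} (hc : c ∈ W) (Mx : Matrix (Fin (2*n)) (Fin (2*n)) ℂ) (k : ℕ) :
    ber (c * ((1/2 : ℂ) • ∑ i, ∑ j, Mx i j • (ψ i * ψ j)) ^ k)
      = if k = n then ((n.factorial : ℂ) * pfaffian Mx) • c else 0 := by
  have hX : (∑ i, ∑ j, Mx i j • (ψ i * ψ j))
      = ∑ p : Fin (2*n) × Fin (2*n), Mx p.1 p.2 • (ψ p.1 * ψ p.2) :=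
    (Fintype.sum_prod_type (fun p : Fin (2*n) × Fin (2*n) => Mx p.1 p.2 • (ψ p.1 * ψ p.2))).symm
  rw [smul_pow, hX, pow_sum_eq]
  rw [mul_smul_comm, _root_.map_smul, Finset.mul_sum, map_sum]
  have hterm : ∀ g : Fin k → Fin (2*n) × Fin (2*n),
      ber (c * (List.ofFn fun a => Mx (g a).1 (g a).2 • (ψ (g a).1 * ψ (g a).2)).prod)
      = (∏ a, Mx (g a).1 (g a).2) •
          ber (c * (List.ofFn fun b : Fin (2*k) => ψ (pairFn g b)).prod) := by
    intro g
    rw [ofFn_prod_smul k (fun a => Mx (g a).1 (g a).2) (fun a => ψ (g a).1 * ψ (g a).2)]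
    rw [ofFn_prod_pair ψ k g]
    rw [mul_smul_comm, _root_.map_smul]
  by_cases hk : k = n
  · subst hk
    rw [if_pos rfl]
    simp only [hterm]
    have htop : ∀ g : Fin k → Fin (2*k) × Fin (2*k),
        ber (c * (List.ofFn fun b : Fin (2*k) => ψ (pairFn g b)).prod)
          = sgn (pairFn g) • c :=
      fun g => ber_word_top ψ hψa ber W hb hc (pairFn g)
    simp only [htop, smul_smul]
    rw [← Finset.sum_smul, pf_sum_eq Mx, smul_smul]
    congr 1
    have hfac : (k.factorial : ℂ) ≠ 0 := Nat.cast_ne_zero.2 (Nat.factorial_ne_zero k)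
    have h2 : ((2:ℂ)^k) ≠ 0 := pow_ne_zero k two_ne_zero
    rw [pfaffian]
    field_simp
    rw [mul_comm, ← mul_assoc, ← mul_pow, mul_one_div_cancel two_ne_zero, one_pow, one_mul]
  · rw [if_neg hk]
    simp only [hterm]
    have hz : ∀ g : Fin k → Fin (2*n) × Fin (2*n),
        ber (c * (List.ofFn fun b : Fin (2*k) => ψ (pairFn g b)).prod) = 0 :=
      fun g => ber_word_ne ψ hψa ber W hb hc (by omega) (pairFn g)
    simp only [hz, smul_zero, Finset.sum_const_zero]

end core
end GB4

namespace GB5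
open GB GB2 GB3 GB4

variable {A : Type*} [Ring A] [Algebra ℂ A]

lemma AC_add_right {a x y : A} (h1 : a * x = -(x * a)) (h2 : a * y = -(y * a)) :
    a * (x + y) = -((x + y) * a) := by
  rw [mul_add, add_mul, h1, h2, neg_add]

lemma AC_symm {x y : A} (h : x * y = -(y * x)) : y * x = -(x * y) := by
  rw [h, neg_neg]

lemma AC_add_left {a x y : A} (h1 : x * a = -(a * x)) (h2 : y * a = -(a * y)) :
    (x + y) * a = -(a * (x + y)) :=
  AC_symm (AC_add_right (AC_symm h1) (AC_symm h2))

lemma AC_neg_right {a x : A} (h : a * x = -(x * a)) : a * (-x) = -((-x) * a) := by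
  rw [mul_neg, h, neg_mul]

lemma AC_smul_right {a x : A} (z : ℂ) (h : a * x = -(x * a)) :
    a * (z • x) = -((z • x) * a) := by
  rw [mul_smul_comm, smul_mul_assoc, h, smul_neg]

lemma AC_sum_right {a : A} {ι : Type*} (s : Finset ι) (f : ι → A)
    (h : ∀ i ∈ s, a * f i = -((f i) * a)) :
    a * (∑ i ∈ s, f i) = -((∑ i ∈ s, f i) * a) := by
  rw [Finset.mul_sum, Finset.sum_mul, ← Finset.sum_neg_distrib]
  exact Finset.sum_congr rfl h

/-- two products of pairwise anticommuting elements commute -/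
lemma comm_of_anticomm {a b x y : A}
    (hxa : x * a = -(a * x)) (hxb : x * b = -(b * x))
    (hya : y * a = -(a * y)) (hyb : y * b = -(b * y)) :
    Commute (a * b) (x * y) := by
  have hbx : b * x = -(x * b) := AC_symm hxb
  have hax : a * x = -(x * a) := AC_symm hxa
  have hby : b * y = -(y * b) := AC_symm hyb
  have hay : a * y = -(y * a) := AC_symm hya
  show a * b * (x * y) = x * y * (a * b)
  calc a * b * (x * y) = a * (b * x * y) := by rw [mul_assoc, mul_assoc]
    _ = a * (-(x * b) * y) := by rw [hbx]
    _ = -(a * (x * (b * y))) := by rw [neg_mul, mul_neg, mul_assoc]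
    _ = -(a * (x * (-(y * b)))) := by rw [hby]
    _ = a * (x * (y * b)) := by rw [mul_neg, mul_neg, neg_neg]
    _ = a * x * (y * b) := by rw [mul_assoc]
    _ = -(x * a) * (y * b) := by rw [hax]
    _ = -(x * (a * y * b)) := by rw [neg_mul, mul_assoc, mul_assoc]
    _ = -(x * (-(y * a) * b)) := by rw [hay]
    _ = x * (y * (a * b)) := by rw [neg_mul, mul_neg, neg_neg, mul_assoc]
    _ = x * y * (a * b) := by rw [mul_assoc]

lemma span_mul_mem (C : Subring A) {x y : A}
    (hx : x ∈ Submodule.span ℂ (C : Set A)) (hy : y ∈ Submodule.span ℂ (C : Set A)) :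
    x * y ∈ Submodule.span ℂ (C : Set A) := by
  induction hx using Submodule.span_induction with
  | mem z hz =>
      induction hy using Submodule.span_induction with
      | mem w hw => exact Submodule.subset_span (C.mul_mem hz hw)
      | zero => rw [mul_zero]; exact Submodule.zero_mem _
      | add a b _ _ ha hb => rw [mul_add]; exact Submodule.add_mem _ ha hb
      | smul t a _ ha => rw [mul_smul_comm]; exact Submodule.smul_mem _ t ha
  | zero => rw [zero_mul]; exact Submodule.zero_mem _
  | add a b _ _ ha hb => rw [add_mul]; exact Submodule.add_mem _ ha hb
  | smul t a _ ha => rw [smul_mul_assoc]; exact Submodule.smul_mem _ t ha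

lemma span_pow_mem (C : Subring A) {x : A}
    (hx : x ∈ Submodule.span ℂ (C : Set A)) (k : ℕ) :
    x ^ k ∈ Submodule.span ℂ (C : Set A) := by
  induction k with
  | zero => rw [pow_zero]; exact Submodule.subset_span C.one_mem
  | succ k ih => rw [pow_succ]; exact span_mul_mem C ih hx

lemma hber_span (C : Subring A) {n : ℕ} (θ : Fin (2*n) → A) (ber : A →ₗ[ℂ] A)
    (hber : ∀ c ∈ C, ∀ I : Finset (Fin (2*n)),
      ber (c * gmonomial θ I) = if I = Finset.univ then c else 0) :
    ∀ c ∈ Submodule.span ℂ (C : Set A), ∀ I : Finset (Fin (2*n)),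
      ber (c * gmonomial θ I) = if I = Finset.univ then c else 0 := by
  intro c hc I
  induction hc using Submodule.span_induction with
  | mem z hz => exact hber z hz I
  | zero => rw [zero_mul, map_zero]; split <;> rfl
  | add a b _ _ ha hb => rw [add_mul, map_add, ha, hb]; split <;> simp
  | smul t a _ ha => rw [smul_mul_assoc, _root_.map_smul, ha]; split <;> simp

end GB5

namespace GB6
open GB GB2 GB3 GB4 GB5

variable {A : Type*} [Ring A] [Algebra ℂ A] {n : ℕ}
  (θ η : Fin (2*n) → A)

/-- span of (eta-word) * (theta-word with fewer than `L` letters) -/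
def Zmod (L : ℕ) : Submodule ℂ A :=
  Submodule.span ℂ {x | ∃ (p q : ℕ) (h : Fin p → Fin (2*n)) (t : Fin q → Fin (2*n)),
    q < L ∧ x = (List.ofFn fun a => η (h a)).prod * (List.ofFn fun a => θ (t a)).prod}

lemma Zmod_mono {L L' : ℕ} (hLL : L ≤ L') : Zmod θ η L ≤ Zmod θ η L' := by
  apply Submodule.span_mono
  rintro x ⟨p, q, h, t, hq, rfl⟩
  exact ⟨p, q, h, t, by omega, rfl⟩

lemma theta_mul_etaword (i : Fin (2*n))
    (hηθ : ∀ i j, η i * θ j = -(θ j * η i)) :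
    ∀ (p : ℕ) (h : Fin p → Fin (2*n)),
      θ i * (List.ofFn fun a => η (h a)).prod
        = ((-1:ℤ)^p) • ((List.ofFn fun a => η (h a)).prod * θ i) := by
  intro p
  induction p with
  | zero => intro h; simp
  | succ p ih =>
      intro h
      rw [List.ofFn_succ, List.prod_cons]
      have h1 : θ i * η (h 0) = -(η (h 0) * θ i) := AC_symm (hηθ (h 0) i)
      calc θ i * (η (h 0) * (List.ofFn fun a => η (h a.succ)).prod)
          = (θ i * η (h 0)) * (List.ofFn fun a => η (h a.succ)).prod := by rw [mul_assoc]
        _ = -(η (h 0) * (θ i * (List.ofFn fun a => η (h a.succ)).prod)) := by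
              rw [h1, neg_mul, mul_assoc]
        _ = -(η (h 0) * ((-1:ℤ)^p • ((List.ofFn fun a => η (h a.succ)).prod * θ i))) := by
              rw [ih]
        _ = ((-1:ℤ)^(p+1)) • (η (h 0) * ((List.ofFn fun a => η (h a.succ)).prod * θ i)) := by
              rw [mul_smul_comm, ← neg_smul, pow_succ, mul_neg_one]
        _ = ((-1:ℤ)^(p+1)) • ((η (h 0) * (List.ofFn fun a => η (h a.succ)).prod) * θ i) := by
              rw [mul_assoc]

lemma theta_mul_Zmod (hηθ : ∀ i j, η i * θ j = -(θ j * η i)) (i : Fin (2*n)) (L : ℕ)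
    {x : A} (hx : x ∈ Zmod θ η L) : θ i * x ∈ Zmod θ η (L+1) := by
  induction hx using Submodule.span_induction with
  | mem z hz =>
      obtain ⟨p, q, h, t, hq, rfl⟩ := hz
      rw [← mul_assoc, theta_mul_etaword θ η i hηθ p h, smul_mul_assoc, mul_assoc]
      refine zsmul_mem ?_ _
      apply Submodule.subset_span
      refine ⟨p, q+1, h, Fin.cons i t, by omega, ?_⟩
      congr 1
      rw [List.ofFn_succ, List.prod_cons]
      simp
  | zero => rw [mul_zero]; exact Submodule.zero_mem _
  | add a b _ _ ha hb => rw [mul_add]; exact Submodule.add_mem _ ha hb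
  | smul t a _ ha => rw [mul_smul_comm]; exact Submodule.smul_mem _ t ha

lemma eta_mul_Zmod (k : Fin (2*n)) (L : ℕ)
    {x : A} (hx : x ∈ Zmod θ η L) : η k * x ∈ Zmod θ η L := by
  induction hx using Submodule.span_induction with
  | mem z hz =>
      obtain ⟨p, q, h, t, hq, rfl⟩ := hz
      rw [← mul_assoc]
      apply Submodule.subset_span
      refine ⟨p+1, q, Fin.cons k h, t, hq, ?_⟩
      congr 1
      rw [List.ofFn_succ, List.prod_cons]
      simp
  | zero => rw [mul_zero]; exact Submodule.zero_mem _
  | add a b _ _ ha hb => rw [mul_add]; exact Submodule.add_mem _ ha hb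
  | smul t a _ ha => rw [mul_smul_comm]; exact Submodule.smul_mem _ t ha

lemma etaword_mem_Zmod (q : ℕ) (L : ℕ) (hq : q < L) (t : Fin q → Fin (2*n)) :
    (List.ofFn fun a => θ (t a)).prod ∈ Zmod θ η L := by
  apply Submodule.subset_span
  exact ⟨0, q, Fin.elim0, t, hq, by simp⟩

/-- multiplication by an η-combination preserves Zmod -/
lemma comb_mul_Zmod (z : Fin (2*n) → ℂ) (L : ℕ)
    {x : A} (hx : x ∈ Zmod θ η L) :
    (-(∑ k, z k • η k)) * x ∈ Zmod θ η L := by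
  rw [neg_mul, Finset.sum_mul]
  apply Submodule.neg_mem
  apply Submodule.sum_mem
  intro k _
  rw [smul_mul_assoc]
  exact Submodule.smul_mem _ _ (eta_mul_Zmod θ η k L hx)

lemma list_map_eq_ofFn {α β : Type*} (f : α → β) :
    ∀ l : List α, l.map f = List.ofFn fun i : Fin l.length => f (l.get i) := by
  intro l
  induction l with
  | nil => simp
  | cons a t ih =>
      rw [List.map_cons, ih, List.ofFn_succ]
      rfl

lemma c'_mul_thetaword (c' : Fin (2*n) → A)
    (hc'Z : ∀ (i : Fin (2*n)) (L : ℕ) (x : A), x ∈ Zmod θ η L → c' i * x ∈ Zmod θ η L)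
    (i : Fin (2*n)) (q : ℕ) (t : Fin q → Fin (2*n)) :
    c' i * (List.ofFn fun a => θ (t a)).prod ∈ Zmod θ η (q+1) :=
  hc'Z i (q+1) _ (etaword_mem_Zmod θ η q (q+1) (by omega) t)

lemma word_diff (hηθ : ∀ i j, η i * θ j = -(θ j * η i)) (c' : Fin (2*n) → A)
    (hc'Z : ∀ (i : Fin (2*n)) (L : ℕ) (x : A), x ∈ Zmod θ η L → c' i * x ∈ Zmod θ η L) :
    ∀ l : List (Fin (2*n)),
      (l.map (fun i => θ i + c' i)).prod - (l.map θ).prod ∈ Zmod θ η l.length := by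
  intro l
  induction l with
  | nil => simp
  | cons i t ih =>
      rw [List.map_cons, List.map_cons, List.prod_cons, List.prod_cons]
      set P' := (t.map (fun i => θ i + c' i)).prod with hP'
      set P := (t.map θ).prod with hP
      have hrw : (θ i + c' i) * P' - θ i * P
          = θ i * (P' - P) + (c' i * (P' - P) + c' i * P) := by
        rw [add_mul, mul_sub, mul_sub]
        abel
      rw [hrw, List.length_cons]
      apply Submodule.add_mem
      · exact theta_mul_Zmod θ η hηθ i t.length ih
      apply Submodule.add_mem
      · exact Zmod_mono θ η (by omega) (hc'Z i t.length _ ih)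
      · have := c'_mul_thetaword θ η c' hc'Z i t.length
          (fun a : Fin t.length => t.get a)
        rw [hP, list_map_eq_ofFn θ t]
        exact this

section withber

variable (C : Subring A) (ber : A →ₗ[ℂ] A)
  (hθa : ∀ i j, θ i * θ j = -(θ j * θ i))
  (hηC : ∀ i, η i ∈ C)
  (hber : ∀ c ∈ C, ∀ I : Finset (Fin (2*n)),
    ber (c * gmonomial θ I) = if I = Finset.univ then c else 0)

include hθa hηC hber

lemma ber_Zmod (L : ℕ) (hL : L ≤ 2*n) {x : A} (hx : x ∈ Zmod θ η L)
    {c : A} (hc : c ∈ Submodule.span ℂ (C : Set A)) : ber (c * x) = 0 := by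
  induction hx using Submodule.span_induction with
  | mem z hz =>
      obtain ⟨p, q, h, t, hq, rfl⟩ := hz
      rw [← mul_assoc]
      have hw : (List.ofFn fun a => η (h a)).prod ∈ C := by
        apply list_prod_mem
        intro x hx
        rw [List.mem_ofFn] at hx
        obtain ⟨a, rfl⟩ := hx
        exact hηC (h a)
      have hcw : c * (List.ofFn fun a => η (h a)).prod ∈ Submodule.span ℂ (C : Set A) :=
        span_mul_mem C hc (Submodule.subset_span hw)
      exact ber_word_ne θ hθa ber (Submodule.span ℂ (C : Set A))
        (hber_span C θ ber hber) hcw (by omega) t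
  | zero => rw [mul_zero, map_zero]
  | add a b _ _ ha hb => rw [mul_add, map_add, ha, hb, add_zero]
  | smul z a _ ha => rw [mul_smul_comm, _root_.map_smul, ha, smul_zero]

lemma hber_shifted (hηθ : ∀ i j, η i * θ j = -(θ j * η i)) (c' : Fin (2*n) → A)
    (hc'Z : ∀ (i : Fin (2*n)) (L : ℕ) (x : A), x ∈ Zmod θ η L → c' i * x ∈ Zmod θ η L) :
    ∀ c ∈ Submodule.span ℂ (C : Set A), ∀ I : Finset (Fin (2*n)),
      ber (c * gmonomial (fun i => θ i + c' i) I) = if I = Finset.univ then c else 0 := by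
  intro c hc I
  have hdiff := word_diff θ η hηθ c' hc'Z (I.sort (· ≤ ·))
  have hsplit : ber (c * gmonomial (fun i => θ i + c' i) I)
      = ber (c * gmonomial θ I)
        + ber (c * (((I.sort (· ≤ ·)).map (fun i => θ i + c' i)).prod
            - ((I.sort (· ≤ ·)).map θ).prod)) := by
    rw [← map_add, ← mul_add, gmonomial, gmonomial]
    congr 2
    abel
  rw [hsplit, hber_span C θ ber hber c hc I]
  have hlen : (I.sort (· ≤ ·)).length = I.card := Finset.length_sort _
  have hcard : I.card ≤ 2*n := by
    have := Finset.card_le_univ I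
    simpa using this
  rw [ber_Zmod θ η C ber hθa hηC hber (I.sort (· ≤ ·)).length (by omega) hdiff hc,
    add_zero]

end withber
end GB6

namespace GB7
open GB GB2 GB3 GB4 GB5 GB6

variable {A : Type*} [Ring A] [Algebra ℂ A] {n : ℕ}

noncomputable def cshift (M : Matrix (Fin (2*n)) (Fin (2*n)) ℂ) (η : Fin (2*n) → A) :
    Fin (2*n) → A :=
  fun i => -(∑ k, (M⁻¹) i k • η k)

variable (M : Matrix (Fin (2*n)) (Fin (2*n)) ℂ) (hM : Mᵀ = -M) (hMinv : IsUnit M.det)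
  (θ η : Fin (2*n) → A)

lemma hMM (hMinv : IsUnit M.det) :
    ∀ i k, (∑ j, M i j * (M⁻¹) j k) = if i = k then 1 else 0 := by
  intro i k
  rw [← Matrix.mul_apply, Matrix.mul_nonsing_inv M hMinv, Matrix.one_apply]

lemma hMMT (hM : Mᵀ = -M) (hMinv : IsUnit M.det) :
    ∀ j k, (∑ i, M i j * (M⁻¹) i k) = -(if j = k then 1 else 0) := by
  intro j k
  have h1 : (∑ i, M i j * (M⁻¹) i k) = (Mᵀ * M⁻¹) j k := by
    rw [Matrix.mul_apply]
    exact Finset.sum_congr rfl fun i _ => by rw [Matrix.transpose_apply]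
  rw [h1, hM, Matrix.neg_mul, Matrix.mul_nonsing_inv M hMinv]
  simp [Matrix.one_apply]

lemma hMinvT (hM : Mᵀ = -M) (hMinv : IsUnit M.det) :
    ∀ i j, (M⁻¹) j i = -((M⁻¹) i j) := by
  intro i j
  have hneg : (-M)⁻¹ = -(M⁻¹) := by
    apply Matrix.inv_eq_right_inv
    rw [neg_mul_neg, Matrix.mul_nonsing_inv M hMinv]
  have h1 : (M⁻¹)ᵀ = -(M⁻¹) := by
    rw [Matrix.transpose_nonsing_inv, hM, hneg]
  have h2 := congrFun (congrFun h1 i) j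
  rw [Matrix.transpose_apply, Matrix.neg_apply] at h2
  exact h2

lemma hMc (hMinv : IsUnit M.det) (i : Fin (2*n)) :
    (∑ j, M i j • cshift M η j) = -(η i) := by
  unfold cshift
  have step : ∀ j, M i j • (-(∑ k, (M⁻¹) j k • η k))
      = ∑ k, -((M i j * (M⁻¹) j k) • η k) := by
    intro j
    rw [smul_neg, Finset.smul_sum, ← Finset.sum_neg_distrib]
    exact Finset.sum_congr rfl fun k _ => by rw [smul_smul]
  simp only [step]
  rw [Finset.sum_comm]
  have step2 : ∀ k, (∑ j, -((M i j * (M⁻¹) j k) • η k))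
      = -((if i = k then 1 else 0 : ℂ) • η k) := by
    intro k
    rw [Finset.sum_neg_distrib, ← Finset.sum_smul, hMM M hMinv i k]
  simp only [step2]
  rw [Finset.sum_neg_distrib]
  simp only [ite_smul, one_smul, zero_smul]
  rw [Finset.sum_ite_eq]
  simp

lemma hMcT (hM : Mᵀ = -M) (hMinv : IsUnit M.det) (j : Fin (2*n)) :
    (∑ i, M i j • cshift M η i) = η j := by
  unfold cshift
  have step : ∀ i, M i j • (-(∑ k, (M⁻¹) i k • η k))
      = ∑ k, -((M i j * (M⁻¹) i k) • η k) := by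
    intro i
    rw [smul_neg, Finset.smul_sum, ← Finset.sum_neg_distrib]
    exact Finset.sum_congr rfl fun k _ => by rw [smul_smul]
  simp only [step]
  rw [Finset.sum_comm]
  have step2 : ∀ k, (∑ i, -((M i j * (M⁻¹) i k) • η k))
      = (if j = k then 1 else 0 : ℂ) • η k := by
    intro k
    rw [Finset.sum_neg_distrib, ← Finset.sum_smul, hMMT M hM hMinv j k, neg_smul, neg_neg]
  simp only [step2]
  simp only [ite_smul, one_smul, zero_smul]
  rw [Finset.sum_ite_eq]
  simp

lemma E1_eq (hMinv : IsUnit M.det) (hηθ : ∀ i j, η i * θ j = -(θ j * η i)) :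
    (∑ i, ∑ j, M i j • (θ i * cshift M η j)) = ∑ i, η i * θ i := by
  refine Finset.sum_congr rfl fun i _ => ?_
  have h1 : (∑ j, M i j • (θ i * cshift M η j)) = θ i * (∑ j, M i j • cshift M η j) := by
    rw [Finset.mul_sum]
    exact Finset.sum_congr rfl fun j _ => (mul_smul_comm _ _ _).symm
  rw [h1, hMc M η hMinv i, mul_neg, ← hηθ i i]

lemma E2_eq (hM : Mᵀ = -M) (hMinv : IsUnit M.det)
    (hηθ : ∀ i j, η i * θ j = -(θ j * η i)) :
    (∑ i, ∑ j, M i j • (cshift M η i * θ j)) = ∑ i, η i * θ i := by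
  rw [Finset.sum_comm]
  refine Finset.sum_congr rfl fun j _ => ?_
  have h1 : (∑ i, M i j • (cshift M η i * θ j))
      = (∑ i, M i j • cshift M η i) * θ j := by
    rw [Finset.sum_mul]
    exact Finset.sum_congr rfl fun i _ => (smul_mul_assoc _ _ _).symm
  rw [h1, hMcT M η hM hMinv j]

lemma E3_eq (hM : Mᵀ = -M) (hMinv : IsUnit M.det) :
    (∑ i, ∑ j, M i j • (cshift M η i * cshift M η j))
      = -(∑ i, ∑ j, (M⁻¹) i j • (η i * η j)) := by
  have h1 : ∀ i, (∑ j, M i j • (cshift M η i * cshift M η j))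
      = cshift M η i * (∑ j, M i j • cshift M η j) := by
    intro i
    rw [Finset.mul_sum]
    exact Finset.sum_congr rfl fun j _ => (mul_smul_comm _ _ _).symm
  simp only [h1, hMc M η hMinv]
  have h2 : ∀ i, cshift M η i * -(η i) = ∑ k, (M⁻¹) i k • (η k * η i) := by
    intro i
    unfold cshift
    rw [neg_mul_neg, Finset.sum_mul]
    exact Finset.sum_congr rfl fun k _ => smul_mul_assoc _ _ _
  simp only [h2]
  rw [Finset.sum_comm, ← Finset.sum_neg_distrib]
  refine Finset.sum_congr rfl fun i _ => ?_
  rw [← Finset.sum_neg_distrib]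
  refine Finset.sum_congr rfl fun j _ => ?_
  rw [hMinvT M hM hMinv i j, neg_smul]

lemma complete_square (hM : Mᵀ = -M) (hMinv : IsUnit M.det)
    (hηθ : ∀ i j, η i * θ j = -(θ j * η i)) :
    (1/2 : ℂ) • (∑ i, ∑ j, M i j • (θ i * θ j)) + ∑ i, η i * θ i
      = (1/2 : ℂ) • (∑ i, ∑ j, M i j • ((θ i + cshift M η i) * (θ j + cshift M η j)))
        + (1/2 : ℂ) • (∑ i, ∑ j, (M⁻¹) i j • (η i * η j)) := by
  have hexp : ∀ i j, M i j • ((θ i + cshift M η i) * (θ j + cshift M η j))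
      = M i j • (θ i * θ j) + (M i j • (θ i * cshift M η j)
        + (M i j • (cshift M η i * θ j) + M i j • (cshift M η i * cshift M η j))) := by
    intro i j
    rw [add_mul, mul_add, mul_add]
    rw [smul_add, smul_add, smul_add]
    abel
  have hsplit : (∑ i, ∑ j, M i j • ((θ i + cshift M η i) * (θ j + cshift M η j)))
      = (∑ i, ∑ j, M i j • (θ i * θ j)) + ((∑ i, ∑ j, M i j • (θ i * cshift M η j))
        + ((∑ i, ∑ j, M i j • (cshift M η i * θ j))
          + (∑ i, ∑ j, M i j • (cshift M η i * cshift M η j)))) := by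
    simp only [hexp, Finset.sum_add_distrib]
  rw [hsplit, E1_eq M θ η hMinv hηθ, E2_eq M θ η hM hMinv hηθ, E3_eq M η hM hMinv]
  set T0 := ∑ i, ∑ j, M i j • (θ i * θ j)
  set L := ∑ i, η i * θ i
  set Se := ∑ i, ∑ j, (M⁻¹) i j • (η i * η j)
  module

end GB7

namespace GB8
open GB GB2 GB3 GB4 GB5 GB6 GB7

variable {A : Type*} [Ring A] [Algebra ℂ A]

lemma commute_smul_smul {x y : A} (z w : ℂ) (h : Commute x y) : Commute (z • x) (w • y) := by
  show (z • x) * (w • y) = (w • y) * (z • x)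
  rw [smul_mul_smul_comm, smul_mul_smul_comm, h.eq, mul_comm z w]

lemma commute_sum_sum {ι κ : Type*} (s : Finset ι) (t : Finset κ) (f : ι → A) (g : κ → A)
    (h : ∀ i ∈ s, ∀ j ∈ t, Commute (f i) (g j)) :
    Commute (∑ i ∈ s, f i) (∑ j ∈ t, g j) := by
  show _ = _
  rw [Finset.sum_mul_sum, Finset.sum_mul_sum]
  rw [Finset.sum_comm]
  refine Finset.sum_congr rfl fun j hj => Finset.sum_congr rfl fun i hi => ?_
  exact (h i hi j hj).eq

end GB8

/-- Gaussian Berezin integral with sources: for an invertible antisymmetric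
`2n x 2n` matrix `M` and odd sources `eta_i` (odd elements of the coefficient
Grassmann algebra `C`, anticommuting among themselves and with the Grassmann
generators `theta_i`),
`int exp((1/2) theta^T M theta + eta^T theta) dtheta
   = Pf(M) * exp((1/2) eta^T M^(-1) eta)`,
where the Berezin integral `ber` extracts the coefficient of the top monomial
`theta_1 ... theta_{2n}`. -/
theorem gaussian_berezin_with_source
    {A : Type*} [Ring A] [Algebra ℂ A] (C : Subring A) (n : ℕ)
    (M : Matrix (Fin (2 * n)) (Fin (2 * n)) ℂ) (hM : Mᵀ = -M)
    (hMinv : IsUnit M.det)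
    (θ η : Fin (2 * n) → A)
    (hθ : ∀ i j, θ i * θ j = -(θ j * θ i)) (hθ0 : ∀ i, θ i * θ i = 0)
    (hη : ∀ i j, η i * η j = -(η j * η i)) (hη0 : ∀ i, η i * η i = 0)
    (hηθ : ∀ i j, η i * θ j = -(θ j * η i))
    (hηC : ∀ i, η i ∈ C)
    (ber : A →ₗ[ℂ] A)
    (hber : ∀ c ∈ C, ∀ I : Finset (Fin (2 * n)),
      ber (c * gmonomial θ I) = if I = Finset.univ then c else 0) :
    ber (gexp (4 * n + 1)
        ((1 / 2 : ℂ) • (∑ i, ∑ j, M i j • (θ i * θ j)) + ∑ i, η i * θ i)) =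
      pfaffian M • gexp (n + 1)
        ((1 / 2 : ℂ) • ∑ i, ∑ j, (M⁻¹) i j • (η i * η j)) := by
  classical
  open GB GB2 GB3 GB4 GB5 GB6 GB7 GB8 in
  rw [GB7.complete_square M θ η hM hMinv hηθ]
  set W : Submodule ℂ A := Submodule.span ℂ (C : Set A) with hW
  set ψ : Fin (2*n) → A := fun i => θ i + GB7.cshift M η i with hψdef
  -- anticommutation plumbing
  have hACθc : ∀ i j, θ i * GB7.cshift M η j = -(GB7.cshift M η j * θ i) := by
    intro i j
    refine GB5.AC_neg_right ?_
    refine GB5.AC_sum_right _ _ fun k _ => ?_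
    exact GB5.AC_smul_right _ (GB5.AC_symm (hηθ k i))
  have hACηc : ∀ i j, η i * GB7.cshift M η j = -(GB7.cshift M η j * η i) := by
    intro i j
    refine GB5.AC_neg_right ?_
    refine GB5.AC_sum_right _ _ fun k _ => ?_
    exact GB5.AC_smul_right _ (hη i k)
  have hACcc : ∀ i j, GB7.cshift M η i * GB7.cshift M η j
      = -(GB7.cshift M η j * GB7.cshift M η i) := by
    intro i j
    show (-(∑ k, (M⁻¹) i k • η k)) * GB7.cshift M η j
        = -(GB7.cshift M η j * (-(∑ k, (M⁻¹) i k • η k)))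
    refine GB5.AC_symm (GB5.AC_neg_right (GB5.AC_sum_right _ _ fun k _ => ?_))
    exact GB5.AC_smul_right _ (GB5.AC_symm (hACηc k j))
  have hACηψ : ∀ k i, η k * ψ i = -(ψ i * η k) :=
    fun k i => GB5.AC_add_right (hηθ k i) (hACηc k i)
  have hψa : ∀ i j, ψ i * ψ j = -(ψ j * ψ i) := by
    intro i j
    have h1 : θ i * ψ j = -(ψ j * θ i) :=
      GB5.AC_add_right (hθ i j) (hACθc i j)
    have h2 : GB7.cshift M η i * ψ j = -(ψ j * GB7.cshift M η i) := by
      refine GB5.AC_add_right ?_ (hACcc i j)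
      exact GB5.AC_symm (hACθc j i)
    exact GB5.AC_add_left h1 h2
  -- shifted Berezin rule
  have hc'Z : ∀ (i : Fin (2*n)) (L : ℕ) (x : A),
      x ∈ GB6.Zmod θ η L → GB7.cshift M η i * x ∈ GB6.Zmod θ η L :=
    fun i L x hx => GB6.comb_mul_Zmod θ η (fun k => (M⁻¹) i k) L hx
  have hber' : ∀ c ∈ W, ∀ I : Finset (Fin (2*n)),
      ber (c * gmonomial ψ I) = if I = Finset.univ then c else 0 :=
    GB6.hber_shifted θ η C ber hθ hηC hber hηθ (fun i => GB7.cshift M η i) hc'Z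
  -- abbreviations
  set S : A := (1/2 : ℂ) • ∑ i, ∑ j, (M⁻¹) i j • (η i * η j) with hSdef
  set Q' : A := (1/2 : ℂ) • ∑ i, ∑ j, M i j • (ψ i * ψ j) with hQ'def
  -- membership of S-powers in W
  have hSW : S ∈ W := by
    refine Submodule.smul_mem _ _ (Submodule.sum_mem _ fun i _ => Submodule.sum_mem _ fun j _ => ?_)
    exact Submodule.smul_mem _ _ (Submodule.subset_span (C.mul_mem (hηC i) (hηC j)))
  have hSbW : ∀ b : ℕ, S ^ b ∈ W := fun b => GB5.span_pow_mem C hSW b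
  -- commutation
  have hQS : Commute Q' S := by
    refine GB8.commute_smul_smul _ _ ?_
    refine GB8.commute_sum_sum _ _ _ _ fun i _ j _ => ?_
    refine GB8.commute_sum_sum _ _ _ _ fun k _ l _ => ?_
    refine GB8.commute_smul_smul _ _ ?_
    exact GB5.comm_of_anticomm (hACηψ j i) (hACηψ j k) (hACηψ l i) (hACηψ l k)
  -- nilpotency of S
  have hSe_nil : (∑ i, ∑ j, (M⁻¹) i j • (η i * η j)) ^ (n+1) = 0 := by
    have hprod : (∑ i, ∑ j, (M⁻¹) i j • (η i * η j))
        = ∑ p : Fin (2*n) × Fin (2*n), (M⁻¹) p.1 p.2 • (η p.1 * η p.2) :=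
      (Fintype.sum_prod_type (fun p : Fin (2*n) × Fin (2*n) =>
        (M⁻¹) p.1 p.2 • (η p.1 * η p.2))).symm
    rw [hprod, GB.pow_sum_eq]
    refine Finset.sum_eq_zero fun g _ => ?_
    rw [GB.ofFn_prod_smul (n+1) (fun a => (M⁻¹) (g a).1 (g a).2)
      (fun a => η (g a).1 * η (g a).2)]
    rw [GB.ofFn_prod_pair η (n+1) g]
    rw [← GB3.Phi_word η hη (GB.pairFn g)]
    have hninj : ¬ Function.Injective (GB.pairFn g) := by
      obtain ⟨a, b, hne, heq⟩ := Fintype.exists_ne_map_eq_of_card_lt (GB.pairFn g)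
        (by simp only [Fintype.card_fin]; omega)
      exact fun hinj => hne (hinj heq)
    rw [GB.wordL_eq_zero _ hninj, map_zero, smul_zero]
  have hSnil : ∀ b : ℕ, n + 1 ≤ b → S ^ b = 0 := by
    intro b hb
    have hsplit : S ^ b = S^(n+1) * S^(b-(n+1)) := by
      rw [← pow_add]
      congr 1
      omega
    have hS1 : S^(n+1) = 0 := by rw [hSdef, smul_pow, hSe_nil, smul_zero]
    rw [hsplit, hS1, zero_mul]
  -- the power computation
  have hberm : ∀ m b : ℕ, ber (Q' ^ m * S ^ b)
      = if m = n then (((n.factorial : ℂ)) * pfaffian M) • S ^ b else 0 := by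
    intro m b
    rw [(hQS.pow_pow m b).eq]
    exact GB4.ber_Q_pow ψ hψa ber W hber' (hSbW b) M m
  -- main computation
  unfold gexp
  rw [map_sum]
  have hterm : ∀ k : ℕ,
      ber ((k.factorial : ℂ)⁻¹ • (Q' + S) ^ k)
        = if n ≤ k then (k.factorial : ℂ)⁻¹ •
            ((k.choose n) • (((n.factorial : ℂ) * pfaffian M) • S ^ (k - n))) else 0 := by
    intro k
    rw [_root_.map_smul, hQS.add_pow, map_sum]
    have hterm2 : ∀ m ∈ Finset.range (k+1),
        ber (Q' ^ m * S ^ (k - m) * ((k.choose m : ℕ) : A))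
          = if m = n then (k.choose m) • (((n.factorial : ℂ) * pfaffian M) • S ^ (k - m))
            else 0 := by
      intro m _
      have hcast : Q' ^ m * S ^ (k - m) * ((k.choose m : ℕ) : A)
          = (k.choose m) • (Q' ^ m * S ^ (k - m)) := by
        rw [(Nat.cast_commute (k.choose m) (Q' ^ m * S ^ (k - m))).eq.symm, nsmul_eq_mul]
      rw [hcast, map_nsmul, hberm m (k - m)]
      split_ifs with h
      · rfl
      · rw [smul_zero]
    rw [Finset.sum_congr rfl hterm2, Finset.sum_ite_eq' (Finset.range (k+1)) n]
    simp only [Finset.mem_range]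
    split_ifs with h1 h2 h2
    · rfl
    · omega
    · omega
    · rw [smul_zero]
  rw [Finset.sum_congr rfl fun k _ => hterm k]
  rw [← Finset.sum_filter]
  rw [show Finset.filter (fun k => n ≤ k) (Finset.range (4*n+1)) = Finset.Ico n (4*n+1) from
    Finset.ext fun a => by simp [Finset.mem_Ico, Finset.mem_range, and_comm]]
  rw [Finset.sum_Ico_eq_sum_range]
  rw [show 4*n+1 - n = 3*n+1 by omega]
  have hH : ∀ b : ℕ, ((n+b).factorial : ℂ)⁻¹ •
      (((n+b).choose n) • (((n.factorial : ℂ) * pfaffian M) • S ^ (n + b - n)))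
        = pfaffian M • ((b.factorial : ℂ)⁻¹ • S ^ b) := by
    intro b
    rw [show n + b - n = b by omega]
    rw [← Nat.cast_smul_eq_nsmul ℂ ((n+b).choose n)]
    rw [smul_smul, smul_smul, smul_smul]
    congr 1
    have hfact : (((n+b).choose n : ℕ) : ℂ) * (n.factorial : ℂ) * (b.factorial : ℂ)
        = ((n+b).factorial : ℂ) := by
      have := Nat.choose_mul_factorial_mul_factorial (Nat.le_add_right n b)
      rw [show n + b - n = b by omega] at this
      push_cast [← this]
      ring
    have h2 : ((b.factorial : ℕ) : ℂ) ≠ 0 := Nat.cast_ne_zero.2 (Nat.factorial_ne_zero _)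
    have h3 : (((n+b).choose n : ℕ) : ℂ) ≠ 0 :=
      Nat.cast_ne_zero.2 (Nat.choose_pos (Nat.le_add_right n b)).ne'
    have h4 : ((n.factorial : ℕ) : ℂ) ≠ 0 := Nat.cast_ne_zero.2 (Nat.factorial_ne_zero _)
    rw [← hfact]
    field_simp
  rw [Finset.sum_congr rfl fun b _ => hH b]
  rw [← Finset.smul_sum]
  congr 1
  symm
  apply Finset.sum_subset (Finset.range_subset_range.2 (by omega))
  intro x _ hx
  rw [Finset.mem_range, not_lt] at hx
  rw [hSnil x (by omega), smul_zero]
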